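/- Let G be a subgroup of Sym(Ω), let x ∈ Sym(Ω), and let f_L, f_R : Stacks(O) → Stacks(O). Then (f_L, f_R) is a perfect refiner for the right coset Gx if and only if (f_L, f_L) is a perfect refiner for G and f_R = f_L^x. In particular, there exists a perfect refiner for G if and only if there exist perfect refiners for all right cosets of G in Sym(Ω). -/

import Mathlib

/-- A right action of a group `G` on a type `O`, written exponentially in the paper:
`act o g` is `o ^ g`. -/
structure RAct (G : Type*) [Group G] (O : Type*) where
  act : O → G → O
  act_one : ∀ o : O, act o 1 = o
  act_mul : ∀ (o : O) (g h : G), act o (g * h) = act (act o g) h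

namespace RAct

variable {G : Type*} [Group G] {O : Type*}

/-- The induced entrywise right action on stacks (finite lists) with entries in `O`. -/
def stack (a : RAct G O) : RAct G (List O) where
  act S g := S.map fun o => a.act o g
  act_one S := by
    have h : (fun o => a.act o 1) = id := funext fun o => a.act_one o
    simp [h]
  act_mul S g h := by
    try simp only []
    rw [List.map_map]
    refine List.map_congr_left fun o _ => ?_
    exact a.act_mul o g h

/-- The transporter set `Iso(x, y) = {g : x ^ g = y}`. -/
def iso {X : Type*} (b : RAct G X) (x y : X) : Set G := {g | b.act x g = y}

/-- A refiner for `U`: a pair of functions on stacks with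
`U ∩ Iso(S, T) ⊆ Iso(f_L S, f_R T)` for all stacks `S`, `T`. -/
def IsRefiner (a : RAct G O) (U : Set G) (fL fR : List O → List O) : Prop :=
  ∀ S T : List O, U ∩ a.stack.iso S T ⊆ a.stack.iso (fL S) (fR T)

/-- A perfect refiner for `U`: a refiner such that
`U ∩ Iso(S, T) = Iso(S ‖ f_L S, T ‖ f_R T)` whenever `|S| = |T|`. -/
def IsPerfectRefiner (a : RAct G O) (U : Set G) (fL fR : List O → List O) : Prop :=
  IsRefiner a U fL fR ∧
    ∀ S T : List O, S.length = T.length →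
      U ∩ a.stack.iso S T = a.stack.iso (S ++ fL S) (T ++ fR T)

/-- The action of `x ∈ G` on functions on stacks: `f ^ x (S) = (f (S ^ x⁻¹)) ^ x`. -/
def conj (a : RAct G O) (f : List O → List O) (x : G) : List O → List O :=
  fun S => a.stack.act (f (a.stack.act S x⁻¹)) x

/-- The combination `f ‖ g` of two functions on stacks: `(f ‖ g)(S) = f S ‖ g S`. -/
def comb (f g : List O → List O) : List O → List O := fun S => f S ++ g S

lemma act_act (a : RAct G O) (S : List O) (g h : G) :
    a.stack.act (a.stack.act S g) h = a.stack.act S (g * h) := (a.stack.act_mul S g h).symm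

lemma act_act_inv (a : RAct G O) (S : List O) (g : G) :
    a.stack.act (a.stack.act S g) g⁻¹ = S := by
  rw [a.act_act, mul_inv_cancel, a.stack.act_one]

lemma act_inv_act (a : RAct G O) (S : List O) (g : G) :
    a.stack.act (a.stack.act S g⁻¹) g = S := by
  rw [a.act_act, inv_mul_cancel, a.stack.act_one]

lemma stack_len (a : RAct G O) (S : List O) (g : G) :
    (a.stack.act S g).length = S.length := List.length_map _

lemma stack_append (a : RAct G O) (S T : List O) (g : G) :
    a.stack.act (S ++ T) g = a.stack.act S g ++ a.stack.act T g := List.map_append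

lemma coset_perfect (a : RAct G O) (H : Subgroup G) (x : G) (fL fR : List O → List O) :
    a.IsPerfectRefiner {u | ∃ g ∈ H, u = g * x} fL fR ↔
      a.IsPerfectRefiner (H : Set G) fL fL ∧ fR = a.conj fL x := by
  constructor
  · rintro ⟨href, heq⟩
    have hfR : ∀ T, fR T = a.stack.act (fL (a.stack.act T x⁻¹)) x := by
      intro T
      have hlen : (a.stack.act T x⁻¹).length = T.length := a.stack_len T x⁻¹
      have hx : x ∈ {u | ∃ g ∈ H, u = g * x} ∩ a.stack.iso (a.stack.act T x⁻¹) T :=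
        ⟨⟨1, H.one_mem, (one_mul x).symm⟩, a.act_inv_act T x⟩
      rw [heq _ T hlen] at hx
      have hx' : a.stack.act (a.stack.act T x⁻¹ ++ fL (a.stack.act T x⁻¹)) x
          = T ++ fR T := hx
      rw [a.stack_append, a.act_inv_act] at hx'
      exact (List.append_cancel_left hx').symm
    have hconj : fR = a.conj fL x := funext hfR
    have hrefG : a.IsRefiner (↑H) fL fL := by
      rintro S T g ⟨hg, hgiso⟩
      have hgiso' : a.stack.act S g = T := hgiso
      have hmem : g * x ∈ {u | ∃ g ∈ H, u = g * x}
          ∩ a.stack.iso S (a.stack.act T x) := by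
        refine ⟨⟨g, hg, rfl⟩, ?_⟩
        show a.stack.act S (g * x) = a.stack.act T x
        rw [← a.act_act, hgiso']
      have h2 : a.stack.act (fL S) (g * x) = fR (a.stack.act T x) :=
        href S (a.stack.act T x) hmem
      rw [hfR, a.act_act_inv] at h2
      show a.stack.act (fL S) g = fL T
      have h3 : a.stack.act (a.stack.act (fL S) (g * x)) x⁻¹
          = a.stack.act (a.stack.act (fL T) x) x⁻¹ := by rw [h2]
      rw [a.act_act_inv, a.act_act, mul_inv_cancel_right] at h3
      exact h3
    refine ⟨⟨hrefG, ?_⟩, hconj⟩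
    intro S T hST
    ext g
    constructor
    · rintro ⟨hg, hgiso⟩
      have hgiso' : a.stack.act S g = T := hgiso
      have h1 : a.stack.act (fL S) g = fL T := hrefG S T ⟨hg, hgiso⟩
      show a.stack.act (S ++ fL S) g = T ++ fL T
      rw [a.stack_append, hgiso', h1]
    · intro hg
      have hg' : a.stack.act (S ++ fL S) g = T ++ fL T := hg
      have hmem : g * x ∈ a.stack.iso (S ++ fL S)
          (a.stack.act T x ++ fR (a.stack.act T x)) := by
        show a.stack.act (S ++ fL S) (g * x) = _
        rw [← a.act_act, hg', a.stack_append, hfR, a.act_act_inv]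
      rw [← heq S (a.stack.act T x) (by rw [a.stack_len]; exact hST)] at hmem
      obtain ⟨⟨h, hh, hhx⟩, hiso⟩ := hmem
      have hgH : g ∈ H := by
        have hgh : g = h := mul_right_cancel hhx
        rw [hgh]; exact hh
      refine ⟨hgH, ?_⟩
      have hiso' : a.stack.act S (g * x) = a.stack.act T x := hiso
      show a.stack.act S g = T
      have h3 : a.stack.act (a.stack.act S (g * x)) x⁻¹
          = a.stack.act (a.stack.act T x) x⁻¹ := by rw [hiso']
      rw [a.act_act_inv, a.act_act, mul_inv_cancel_right] at h3
      exact h3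
  · rintro ⟨⟨hrefG, heqG⟩, hconj⟩
    subst hconj
    have hrefC : a.IsRefiner {u | ∃ g ∈ H, u = g * x} fL (a.conj fL x) := by
      rintro S T u ⟨⟨g, hg, rfl⟩, hiso⟩
      have hiso' : a.stack.act S (g * x) = T := hiso
      have hg' : a.stack.act S g = a.stack.act T x⁻¹ := by
        rw [← hiso', a.act_act, mul_inv_cancel_right]
      have h1 : a.stack.act (fL S) g = fL (a.stack.act T x⁻¹) :=
        hrefG S (a.stack.act T x⁻¹) ⟨hg, hg'⟩
      show a.stack.act (fL S) (g * x) = a.conj fL x T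
      rw [← a.act_act, h1]; rfl
    refine ⟨hrefC, ?_⟩
    intro S T hST
    ext u
    constructor
    · rintro ⟨hu, hiso⟩
      have hiso' : a.stack.act S u = T := hiso
      have h1 : a.stack.act (fL S) u = a.conj fL x T := hrefC S T ⟨hu, hiso⟩
      show a.stack.act (S ++ fL S) u = T ++ a.conj fL x T
      rw [a.stack_append, hiso', h1]
    · intro hu
      have hu' : a.stack.act (S ++ fL S) u = T ++ a.conj fL x T := hu
      have h2 : u * x⁻¹ ∈ a.stack.iso (S ++ fL S)
          (a.stack.act T x⁻¹ ++ fL (a.stack.act T x⁻¹)) := by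
        show a.stack.act (S ++ fL S) (u * x⁻¹) = _
        rw [← a.act_act, hu', a.stack_append]
        congr 1
        exact a.act_act_inv _ x
      rw [← heqG S (a.stack.act T x⁻¹) (by rw [a.stack_len]; exact hST)] at h2
      obtain ⟨hmemG, hiso2⟩ := h2
      refine ⟨⟨u * x⁻¹, hmemG, by group⟩, ?_⟩
      have hiso2' : a.stack.act S (u * x⁻¹) = a.stack.act T x⁻¹ := hiso2
      show a.stack.act S u = T
      have h3 : a.stack.act (a.stack.act S (u * x⁻¹)) x
          = a.stack.act (a.stack.act T x⁻¹) x := by rw [hiso2']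
      rw [a.act_inv_act, a.act_act, inv_mul_cancel_right] at h3
      exact h3

end RAct

/-- `(f_L, f_R)` is a perfect refiner for the right coset `G x` if and only if
`(f_L, f_L)` is a perfect refiner for `G` and `f_R = f_L ^ x`. In particular, `G` has a
perfect refiner if and only if every right coset of `G` in `Sym Ω` has one. -/
theorem stmt9 {Ω : Type*} [Fintype Ω] [Nonempty Ω] {O : Type*}
    (a : RAct (Equiv.Perm Ω) O) (G : Subgroup (Equiv.Perm Ω)) (x : Equiv.Perm Ω)
    (fL fR : List O → List O) :
    (a.IsPerfectRefiner {u : Equiv.Perm Ω | ∃ g ∈ G, u = g * x} fL fR ↔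
      a.IsPerfectRefiner (G : Set (Equiv.Perm Ω)) fL fL ∧ fR = a.conj fL x) ∧
    ((∃ f₁ f₂ : List O → List O, a.IsPerfectRefiner (G : Set (Equiv.Perm Ω)) f₁ f₂) ↔
      ∀ y : Equiv.Perm Ω, ∃ f₁ f₂ : List O → List O,
        a.IsPerfectRefiner {u : Equiv.Perm Ω | ∃ g ∈ G, u = g * y} f₁ f₂) := by
  have hset : {u : Equiv.Perm Ω | ∃ g ∈ G, u = g * 1} = (G : Set (Equiv.Perm Ω)) := by
    ext u; simp
  constructor
  · exact a.coset_perfect G x fL fR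
  · constructor
    · rintro ⟨f₁, f₂, hf⟩ y
      have h1 : a.IsPerfectRefiner {u : Equiv.Perm Ω | ∃ g ∈ G, u = g * 1} f₁ f₂ := by
        rw [hset]; exact hf
      obtain ⟨hG, -⟩ := (a.coset_perfect G 1 f₁ f₂).mp h1
      exact ⟨f₁, a.conj f₁ y, (a.coset_perfect G y f₁ _).mpr ⟨hG, rfl⟩⟩
    · intro h
      obtain ⟨f₁, f₂, hf⟩ := h 1
      obtain ⟨hG, -⟩ := (a.coset_perfect G 1 f₁ f₂).mp hf
      exact ⟨f₁, f₁, hG⟩
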